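/- arXiv:2002.11795 — 2 statements merged into one kernel-verified Lean document; each statement's English description precedes it below -/
import Mathlib

section
/- Let n, d be real numbers with n ≥ 2, set L := logb 2 n, and suppose 0 < d ≤ n and n·L³ ≤ d⁴. Define f(t) := max 1 (t/d) + √(n/t) · (max 1 (√(t·L)/d) + max 1 (√t/d)). Then f((n·d²)^{1/3}) ≤ 3·(n/d)^{1/3}. -/
private lemma croot_cube (x : ℝ) (hx : 0 ≤ x) : (x ^ 3) ^ ((1 : ℝ) / 3) = x := by
  rw [← Real.rpow_natCast x 3, ← Real.rpow_mul hx]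
  norm_num

/-- Optimization in the proof of Theorem 3.7 in the regime `n·(log n)³ ≤ d⁴`,
with parameter choice `t := (n·d²)^{1/3}`: `f((n·d²)^{1/3}) ≤ 3·(n/d)^{1/3}`. -/
theorem stmt_8 (n d : ℝ) (hn : 2 ≤ n) (hd0 : 0 < d) (hdn : d ≤ n)
    (hd4 : n * (Real.logb 2 n) ^ 3 ≤ d ^ 4) :
    (fun t : ℝ => max 1 (t / d) +
        Real.sqrt (n / t) *
          (max 1 (Real.sqrt (t * Real.logb 2 n) / d) + max 1 (Real.sqrt t / d)))
        ((n * d ^ 2) ^ ((1 : ℝ) / 3))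
      ≤ 3 * (n / d) ^ ((1 : ℝ) / 3) := by
  have hn0 : (0 : ℝ) < n := by linarith
  set L := Real.logb 2 n with hLdef
  have hL1 : (1 : ℝ) ≤ L := by
    have : Real.logb 2 2 ≤ Real.logb 2 n :=
      Real.logb_le_logb_of_le (by norm_num) (by norm_num) hn
    simpa using this
  have hL0 : (0 : ℝ) ≤ L := by linarith
  set t := (n * d ^ 2) ^ ((1 : ℝ) / 3) with htdef
  set u := (n / d) ^ ((1 : ℝ) / 3) with hudef
  have ht0 : 0 < t := Real.rpow_pos_of_pos (by positivity) _
  have hu0 : 0 < u := Real.rpow_pos_of_pos (by positivity) _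
  have ht3 : t ^ 3 = n * d ^ 2 := by
    rw [htdef, ← Real.rpow_natCast _ 3, ← Real.rpow_mul (by positivity)]
    norm_num
  have hu3 : u ^ 3 = n / d := by
    rw [hudef, ← Real.rpow_natCast _ 3, ← Real.rpow_mul (by positivity)]
    norm_num
  -- t/d = u
  have h1 : t / d = u := by
    have h : (t / d) ^ 3 = u ^ 3 := by
      rw [div_pow, ht3, hu3]; field_simp
    calc t / d = ((t / d) ^ 3) ^ ((1 : ℝ) / 3) := (croot_cube _ (by positivity)).symm
      _ = (u ^ 3) ^ ((1 : ℝ) / 3) := by rw [h]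
      _ = u := croot_cube _ hu0.le
  -- √(n/t) = u
  have h2 : Real.sqrt (n / t) = u := by
    have h : n / t = u ^ 2 := by
      have hc : (n / t) ^ 3 = (u ^ 2) ^ 3 := by
        rw [div_pow, ht3, show (u ^ 2) ^ 3 = (u ^ 3) ^ 2 by ring, hu3]
        field_simp
      calc n / t = ((n / t) ^ 3) ^ ((1 : ℝ) / 3) := (croot_cube _ (by positivity)).symm
        _ = ((u ^ 2) ^ 3) ^ ((1 : ℝ) / 3) := by rw [hc]
        _ = u ^ 2 := croot_cube _ (by positivity)
    rw [h, Real.sqrt_sq hu0.le]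
  -- n ≤ d^4
  have hnd4 : n ≤ d ^ 4 := by
    have hL3 : (1 : ℝ) ≤ L ^ 3 := one_le_pow₀ hL1
    nlinarith
  -- √(t*L) ≤ d
  have h3 : Real.sqrt (t * L) / d ≤ 1 := by
    rw [div_le_one hd0]
    have htL : t * L ≤ d ^ 2 := by
      have hc : (t * L) ^ 3 ≤ (d ^ 2) ^ 3 := by
        rw [mul_pow, ht3]; nlinarith
      exact le_of_pow_le_pow_left₀ (by norm_num) (by positivity) hc
    calc Real.sqrt (t * L) ≤ Real.sqrt (d ^ 2) := Real.sqrt_le_sqrt htL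
      _ = d := Real.sqrt_sq hd0.le
  -- √t ≤ d
  have h4 : Real.sqrt t / d ≤ 1 := by
    rw [div_le_one hd0]
    have htd : t ≤ d ^ 2 := by
      have hc : t ^ 3 ≤ (d ^ 2) ^ 3 := by rw [ht3]; nlinarith
      exact le_of_pow_le_pow_left₀ (by norm_num) (by positivity) hc
    calc Real.sqrt t ≤ Real.sqrt (d ^ 2) := Real.sqrt_le_sqrt htd
      _ = d := Real.sqrt_sq hd0.le
  -- 1 ≤ u
  have hu1 : 1 ≤ u := by
    by_contra hlt
    push_neg at hlt
    have : u ^ 3 < 1 := pow_lt_one₀ hu0.le hlt (by norm_num)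
    rw [hu3] at this
    have : n < d := by
      rwa [div_lt_one hd0] at this
    linarith
  simp only
  rw [h1, h2, max_eq_right hu1, max_eq_left h3, max_eq_left h4]
  linarith
end

section
/- Let n, d be real numbers with n ≥ 2, set L := logb 2 n, and suppose 1 ≤ d ≤ n and d⁴ ≤ n·L³. Define f(t) := max 1 (t/d) + √(n/t) · (max 1 (√(t·L)/d) + max 1 (√t/d)). Then there exists a real number t with 1 ≤ t ≤ n such that f(t) ≤ 3·√(n·L)/d. -/
/-- First case of Theorem 3.7: if `1 ≤ d ≤ n` and `d⁴ ≤ n·(log n)³`, then there is a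
parameter `t ∈ [1, n]` with `f(t) ≤ 3·√(n·L)/d`, where
`f(t) = max 1 (t/d) + √(n/t)·(max 1 (√(t·L)/d) + max 1 (√t/d))` and `L = logb 2 n`. -/
theorem stmt_9 (n d : ℝ) (hn : 2 ≤ n) (hd1 : 1 ≤ d) (hdn : d ≤ n)
    (hd4 : d ^ 4 ≤ n * (Real.logb 2 n) ^ 3) :
    ∃ t : ℝ, 1 ≤ t ∧ t ≤ n ∧
      max 1 (t / d) +
          Real.sqrt (n / t) *
            (max 1 (Real.sqrt (t * Real.logb 2 n) / d) + max 1 (Real.sqrt t / d))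
        ≤ 3 * Real.sqrt (n * Real.logb 2 n) / d := by
  set L := Real.logb 2 n with hLdef
  have hd0 : (0:ℝ) < d := lt_of_lt_of_le one_pos hd1
  have hn0 : (0:ℝ) < n := by linarith
  have hL1 : 1 ≤ L := by
    rw [hLdef, show (1:ℝ) = Real.logb 2 2 from (Real.logb_self_eq_one (by norm_num)).symm]
    exact Real.logb_le_logb_of_le (by norm_num) (by norm_num) hn
  have hL0 : (0:ℝ) < L := lt_of_lt_of_le one_pos hL1
  rcases le_total d L with hcase | hcase
  · -- t = d
    refine ⟨d, hd1, hdn, ?_⟩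
    have h2 : d ^ 2 ≤ n * L := by nlinarith
    have hm1 : max 1 (d / d) = 1 := by rw [div_self hd0.ne']; simp
    have hm2 : max 1 (Real.sqrt (d * L) / d) = Real.sqrt (d * L) / d := by
      refine max_eq_right ?_
      rw [le_div_iff₀ hd0, one_mul, Real.le_sqrt hd0.le (by positivity)]
      nlinarith
    have hm3 : max 1 (Real.sqrt d / d) = 1 := by
      refine max_eq_left ?_
      rw [div_le_one hd0, Real.sqrt_le_left hd0.le]
      nlinarith
    rw [hm1, hm2, hm3]
    have e1 : Real.sqrt (n / d) * (Real.sqrt (d * L) / d) = Real.sqrt (n * L) / d := by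
      rw [← mul_div_assoc, ← Real.sqrt_mul (by positivity),
        show n / d * (d * L) = n * L by field_simp]
    have e2 : Real.sqrt (n / d) ≤ Real.sqrt (n * L) / d := by
      have hrw : Real.sqrt (n / d) = Real.sqrt (n * d) / d := by
        rw [Real.sqrt_div hn0.le, Real.sqrt_mul hn0.le, mul_div_assoc,
          Real.sqrt_div_self', mul_one_div]
      rw [hrw]
      gcongr
    have e3 : 1 ≤ Real.sqrt (n * L) / d := by
      rw [le_div_iff₀ hd0, one_mul, Real.le_sqrt hd0.le (by positivity)]
      exact h2
    have expand : Real.sqrt (n / d) * (Real.sqrt (d * L) / d + 1)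
        = Real.sqrt (n * L) / d + Real.sqrt (n / d) := by
      rw [mul_add, e1, mul_one]
    rw [expand, mul_div_assoc]
    linarith
  · -- t = d^2 / L
    have ht1 : (1:ℝ) ≤ d ^ 2 / L := by
      rw [le_div_iff₀ hL0, one_mul]; nlinarith
    have h2 : d ^ 2 ≤ n * L := by
      have hLd : L ^ 2 ≤ d ^ 2 := by nlinarith
      have h3 : d ^ 2 * d ^ 2 ≤ n * L * d ^ 2 := by
        nlinarith [mul_le_mul_of_nonneg_left hLd (by positivity : (0:ℝ) ≤ n * L)]
      exact le_of_mul_le_mul_right h3 (by positivity)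
    refine ⟨d ^ 2 / L, ht1, by rw [div_le_iff₀ hL0]; nlinarith, ?_⟩
    have hm1 : max 1 (d ^ 2 / L / d) = d / L := by
      rw [show d ^ 2 / L / d = d / L by field_simp]
      exact max_eq_right ((one_le_div hL0).mpr hcase)
    have hm2 : max 1 (Real.sqrt (d ^ 2 / L * L) / d) = 1 := by
      rw [show d ^ 2 / L * L = d ^ 2 by field_simp, Real.sqrt_sq hd0.le, div_self hd0.ne']
      simp
    have hm3 : max 1 (Real.sqrt (d ^ 2 / L) / d) = 1 := by
      refine max_eq_left ?_
      rw [div_le_one hd0]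
      calc Real.sqrt (d ^ 2 / L) ≤ Real.sqrt (d ^ 2) :=
            Real.sqrt_le_sqrt (div_le_self (by positivity) hL1)
        _ = d := Real.sqrt_sq hd0.le
    rw [hm1, hm2, hm3]
    have e1 : Real.sqrt (n / (d ^ 2 / L)) = Real.sqrt (n * L) / d := by
      rw [show n / (d ^ 2 / L) = n * L / d ^ 2 from div_div_eq_mul_div n (d ^ 2) L,
        Real.sqrt_div' _ (by positivity), Real.sqrt_sq hd0.le]
    rw [e1]
    have e2 : d / L ≤ Real.sqrt (n * L) / d := by
      rw [div_le_div_iff₀ hL0 hd0]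
      have hdd : d * d = Real.sqrt (d ^ 4) := by
        rw [show d ^ 4 = (d * d) ^ 2 by ring, Real.sqrt_sq (by positivity)]
      have hrhs : Real.sqrt (n * L ^ 3) = Real.sqrt (n * L) * L := by
        rw [show n * L ^ 3 = n * L * L ^ 2 by ring,
          Real.sqrt_mul (by positivity : (0:ℝ) ≤ n * L), Real.sqrt_sq hL0.le]
      rw [hdd, ← hrhs]
      exact Real.sqrt_le_sqrt hd4
    rw [mul_div_assoc]
    linarith
end
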